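/- Let f, g be convex functions on [0,1]^d, bounded in absolute value by B, and coordinate-wise Lipschitz with constants Γ_1, ..., Γ_d < ∞. Then ||f - g||_∞ ≤ ℓ_H(V_f(B), V_g(B)) · √(1 + Γ_1² + ... + Γ_d²), where V_f(B) = {(x, y) : x ∈ [0,1]^d, f(x) ≤ y ≤ B} is the truncated epigraph and ℓ_H denotes the Hausdorff distance between compact subsets of ℝ^{d+1}. -/

import Mathlib

open Metric Set

/-- Truncated epigraph of `f` (defined on the unit cube), as a subset of `ℝ^{d+1}`
with the Euclidean metric. -/
def truncEpigraph (d : ℕ) (f : (Fin d → ℝ) → ℝ) (B : ℝ) :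
    Set (EuclideanSpace ℝ (Fin (d + 1))) :=
  {z | (∀ i : Fin d, z i.castSucc ∈ Set.Icc (0:ℝ) 1) ∧
       f (fun i => z i.castSucc) ≤ z (Fin.last d) ∧ z (Fin.last d) ≤ B}

lemma fullLip {d : ℕ} (Γ : Fin d → ℝ) (f : (Fin d → ℝ) → ℝ)
    (hfLip : ∀ i, ∀ x ∈ Set.Icc (0 : Fin d → ℝ) 1, ∀ y ∈ Set.Icc (0 : Fin d → ℝ) 1,
      (∀ j, j ≠ i → x j = y j) → |f x - f y| ≤ Γ i * |x i - y i|)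
    (x : Fin d → ℝ) (hx : x ∈ Set.Icc (0 : Fin d → ℝ) 1)
    (y : Fin d → ℝ) (hy : y ∈ Set.Icc (0 : Fin d → ℝ) 1) :
    |f x - f y| ≤ ∑ i, Γ i * |x i - y i| := by
  set w : ℕ → (Fin d → ℝ) := fun k j => if (j : ℕ) < k then y j else x j with hw
  have hwmem : ∀ k, w k ∈ Set.Icc (0 : Fin d → ℝ) 1 := by
    intro k
    constructor <;> intro j <;> simp only [hw] <;> split
    · exact hy.1 j
    · exact hx.1 j
    · exact hy.2 j
    · exact hx.2 j
  have key : ∀ k, k ≤ d →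
      |f x - f (w k)| ≤ ∑ i : Fin d, if (i : ℕ) < k then Γ i * |x i - y i| else 0 := by
    intro k
    induction k with
    | zero =>
      intro _
      have : w 0 = x := by funext j; simp [hw]
      simp [this]
    | succ k ih =>
      intro hk1
      have hk : k < d := hk1
      set i₀ : Fin d := ⟨k, hk⟩ with hi₀
      have hstep : |f (w k) - f (w (k + 1))| ≤ Γ i₀ * |x i₀ - y i₀| := by
        have h1 : ∀ j, j ≠ i₀ → w k j = w (k + 1) j := by
          intro j hj
          have : (j : ℕ) ≠ k := fun h => hj (Fin.ext h)
          simp only [hw]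
          by_cases h2 : (j : ℕ) < k
          · have h3 : (j : ℕ) < k + 1 := by omega
            simp [h2, h3]
          · have h3 : ¬ (j : ℕ) < k + 1 := by omega
            simp [h2, h3]
        have := hfLip i₀ (w k) (hwmem k) (w (k + 1)) (hwmem (k + 1)) h1
        have hwk : w k i₀ = x i₀ := by simp [hw, hi₀]
        have hwk1 : w (k + 1) i₀ = y i₀ := by simp [hw, hi₀]
        rwa [hwk, hwk1] at this
      have hsum : (∑ i : Fin d, if (i : ℕ) < k + 1 then Γ i * |x i - y i| else 0)
          = (∑ i : Fin d, if (i : ℕ) < k then Γ i * |x i - y i| else 0)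
            + Γ i₀ * |x i₀ - y i₀| := by
        have h1 : ∀ i : Fin d, (if (i : ℕ) < k + 1 then Γ i * |x i - y i| else 0)
            = (if (i : ℕ) < k then Γ i * |x i - y i| else 0)
              + (if i = i₀ then Γ i₀ * |x i₀ - y i₀| else 0) := by
          intro i
          by_cases h : i = i₀
          · subst h; simp [hi₀]
          · have : (i : ℕ) ≠ k := fun hc => h (Fin.ext hc)
            have h2 : ((i : ℕ) < k + 1) ↔ ((i : ℕ) < k) := by omega
            simp [h, h2]
        rw [Finset.sum_congr rfl (fun i _ => h1 i), Finset.sum_add_distrib,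
          Finset.sum_ite_eq' Finset.univ i₀]
        simp
      calc |f x - f (w (k + 1))|
          ≤ |f x - f (w k)| + |f (w k) - f (w (k + 1))| := abs_sub_le _ _ _
        _ ≤ (∑ i : Fin d, if (i : ℕ) < k then Γ i * |x i - y i| else 0)
              + Γ i₀ * |x i₀ - y i₀| := add_le_add (ih (le_of_lt hk)) hstep
        _ = _ := hsum.symm
  have hwd : w d = y := by
    funext j; simp [hw, j.isLt]
  have := key d le_rfl
  rw [hwd] at this
  simpa using this

lemma cauchySchwarzAux {d : ℕ} (Γ : Fin d → ℝ) (a : ℝ) (ha : 0 ≤ a) (b : Fin d → ℝ)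
    (hb : ∀ i, 0 ≤ b i) (hΓ : ∀ i, 0 ≤ Γ i) :
    a + ∑ i, Γ i * b i ≤ Real.sqrt (1 + ∑ i, Γ i ^ 2) * Real.sqrt (a ^ 2 + ∑ i, b i ^ 2) := by
  have hcs := Finset.sum_mul_sq_le_sq_mul_sq Finset.univ
    (Fin.cons 1 Γ : Fin (d + 1) → ℝ) (Fin.cons a b)
  rw [Fin.sum_univ_succ, Fin.sum_univ_succ, Fin.sum_univ_succ] at hcs
  simp only [Fin.cons_zero, Fin.cons_succ, one_mul, one_pow] at hcs
  have hnn : 0 ≤ a + ∑ i, Γ i * b i := by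
    apply add_nonneg ha
    exact Finset.sum_nonneg fun i _ => mul_nonneg (hΓ i) (hb i)
  have h1 : (a + ∑ i, Γ i * b i) ^ 2 ≤ (1 + ∑ i, Γ i ^ 2) * (a ^ 2 + ∑ i, b i ^ 2) := hcs
  calc a + ∑ i, Γ i * b i = Real.sqrt ((a + ∑ i, Γ i * b i) ^ 2) := by
        rw [Real.sqrt_sq hnn]
    _ ≤ Real.sqrt ((1 + ∑ i, Γ i ^ 2) * (a ^ 2 + ∑ i, b i ^ 2)) := Real.sqrt_le_sqrt h1
    _ = _ := by
        rw [Real.sqrt_mul (by positivity)]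

lemma truncEpigraph_nonempty {d : ℕ} {f : (Fin d → ℝ) → ℝ} {B : ℝ}
    (hfB : ∀ x ∈ Set.Icc (0 : Fin d → ℝ) 1, |f x| ≤ B) :
    (truncEpigraph d f B).Nonempty := by
  have h0 : (0 : Fin d → ℝ) ∈ Set.Icc (0 : Fin d → ℝ) 1 :=
    ⟨le_refl _, fun i => zero_le_one⟩
  refine ⟨(WithLp.equiv 2 _).symm (Fin.snoc 0 B), ?_, ?_, ?_⟩
  · intro i
    have h : ((WithLp.equiv 2 (Fin (d+1) → ℝ)).symm (Fin.snoc 0 B)) i.castSucc = 0 := by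
      simp [WithLp.equiv_symm_apply, WithLp.ofLp_toLp, Fin.snoc_castSucc]
    rw [h]
    exact ⟨le_refl _, zero_le_one⟩
  · have h : (fun i => ((WithLp.equiv 2 (Fin (d+1) → ℝ)).symm (Fin.snoc 0 B)) i.castSucc)
        = (0 : Fin d → ℝ) := by
      funext i; simp [WithLp.equiv_symm_apply, WithLp.ofLp_toLp, Fin.snoc_castSucc]
    rw [h]
    simp only [WithLp.equiv_symm_apply, WithLp.ofLp_toLp, Fin.snoc_last]
    exact le_trans (le_abs_self _) (hfB 0 h0)
  · simp [WithLp.equiv_symm_apply, WithLp.ofLp_toLp, Fin.snoc_last]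

lemma truncEpigraph_bounded {d : ℕ} {f : (Fin d → ℝ) → ℝ} {B : ℝ} (hB : 0 < B)
    (hfB : ∀ x ∈ Set.Icc (0 : Fin d → ℝ) 1, |f x| ≤ B) :
    Bornology.IsBounded (truncEpigraph d f B) := by
  rw [isBounded_iff_forall_norm_le]
  refine ⟨Real.sqrt ((d + 1) * max 1 B ^ 2), ?_⟩
  rintro z ⟨hz1, hz2, hz3⟩
  have hy : (fun i => z i.castSucc) ∈ Set.Icc (0 : Fin d → ℝ) 1 :=
    ⟨fun i => (hz1 i).1, fun i => (hz1 i).2⟩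
  have hcoord : ∀ i : Fin (d + 1), |z i| ≤ max 1 B := by
    intro i
    induction i using Fin.lastCases with
    | last =>
      rw [abs_le]
      constructor
      · have h := (abs_le.mp (hfB _ hy)).1
        calc -(max 1 B) ≤ -B := by simp
          _ ≤ f (fun i => z i.castSucc) := h
          _ ≤ z (Fin.last d) := hz2
      · exact le_trans hz3 (le_max_right _ _)
    | cast j =>
      rw [abs_le]
      exact ⟨le_trans (by simp) (hz1 j).1, le_trans (hz1 j).2 (le_max_left _ _)⟩
  rw [EuclideanSpace.norm_eq]
  apply Real.sqrt_le_sqrt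
  calc ∑ i, ‖z i‖ ^ 2 ≤ ∑ _i : Fin (d + 1), max 1 B ^ 2 := by
        apply Finset.sum_le_sum
        intro i _
        have h1 : ‖z i‖ ≤ max 1 B := by rw [Real.norm_eq_abs]; exact hcoord i
        exact pow_le_pow_left₀ (norm_nonneg _) h1 2
    _ = (d + 1) * max 1 B ^ 2 := by
        rw [Finset.sum_const, Finset.card_univ, Fintype.card_fin, nsmul_eq_mul]
        push_cast
        ring

lemma aux_main {d : ℕ} {B : ℝ} (hB : 0 < B) (Γ : Fin d → ℝ) (hΓ : ∀ i, 0 ≤ Γ i)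
    (f g : (Fin d → ℝ) → ℝ)
    (hfB : ∀ x ∈ Set.Icc (0 : Fin d → ℝ) 1, |f x| ≤ B)
    (hgB : ∀ x ∈ Set.Icc (0 : Fin d → ℝ) 1, |g x| ≤ B)
    (hfLip : ∀ x ∈ Set.Icc (0 : Fin d → ℝ) 1, ∀ y ∈ Set.Icc (0 : Fin d → ℝ) 1,
      |f x - f y| ≤ ∑ i, Γ i * |x i - y i|)
    (x : Fin d → ℝ) (hx : x ∈ Set.Icc (0 : Fin d → ℝ) 1) :
    f x - g x ≤ Metric.hausdorffDist (truncEpigraph d f B) (truncEpigraph d g B) *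
      Real.sqrt (1 + ∑ i, Γ i ^ 2) := by
  set C := Real.sqrt (1 + ∑ i, Γ i ^ 2) with hC
  have hC1 : (1:ℝ) ≤ C := by
    have h0 : (0:ℝ) ≤ ∑ i, Γ i ^ 2 := Finset.sum_nonneg fun i _ => sq_nonneg _
    have h := Real.sqrt_le_sqrt (show (1:ℝ) ≤ 1 + ∑ i, Γ i ^ 2 by linarith)
    rw [Real.sqrt_one] at h
    exact h
  have hC0 : 0 < C := lt_of_lt_of_le one_pos hC1
  have hH0 : 0 ≤ Metric.hausdorffDist (truncEpigraph d f B) (truncEpigraph d g B) :=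
    Metric.hausdorffDist_nonneg
  by_cases ht : f x - g x ≤ 0
  · exact le_trans ht (mul_nonneg hH0 (le_of_lt hC0))
  push_neg at ht
  -- the point p = (x, g x) ∈ V_g
  set p : EuclideanSpace ℝ (Fin (d + 1)) := (WithLp.equiv 2 _).symm (Fin.snoc x (g x)) with hp
  have hpc : ∀ i : Fin d, p i.castSucc = x i := by
    intro i; simp [hp, WithLp.equiv_symm_apply, WithLp.ofLp_toLp, Fin.snoc_castSucc]
  have hpl : p (Fin.last d) = g x := by
    simp [hp, WithLp.equiv_symm_apply, WithLp.ofLp_toLp, Fin.snoc_last]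
  have hpmem : p ∈ truncEpigraph d g B := by
    refine ⟨fun i => by rw [hpc i]; exact ⟨hx.1 i, hx.2 i⟩, ?_, ?_⟩
    · rw [hpl]
      have : (fun i => p i.castSucc) = x := funext hpc
      rw [this]
    · rw [hpl]; exact le_trans (le_abs_self _) (hgB x hx)
  -- key pointwise bound
  have hkey : ∀ q ∈ truncEpigraph d f B, f x - g x ≤ C * dist p q := by
    rintro q ⟨hq1, hq2, hq3⟩
    set y : Fin d → ℝ := fun i => q i.castSucc with hy
    have hymem : y ∈ Set.Icc (0 : Fin d → ℝ) 1 := ⟨fun i => (hq1 i).1, fun i => (hq1 i).2⟩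
    have h1 : f x ≤ f y + ∑ i, Γ i * |x i - y i| := by
      have habs := hfLip x hx y hymem
      linarith [le_abs_self (f x - f y)]
    have h2 : f x - g x ≤ |q (Fin.last d) - g x| + ∑ i, Γ i * |x i - y i| := by
      have hle : f x - g x ≤ (q (Fin.last d) - g x) + ∑ i, Γ i * |x i - y i| := by
        have := hq2
        have hfy : f y ≤ q (Fin.last d) := hq2
        linarith
      exact le_trans hle (by linarith [le_abs_self (q (Fin.last d) - g x)])
    have hcs := cauchySchwarzAux Γ (|q (Fin.last d) - g x|) (abs_nonneg _)
      (fun i => |x i - y i|) (fun i => abs_nonneg _) hΓ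
    have hdist : dist p q
        = Real.sqrt (|q (Fin.last d) - g x| ^ 2 + ∑ i, |x i - y i| ^ 2) := by
      rw [EuclideanSpace.dist_eq, Fin.sum_univ_castSucc]
      congr 1
      rw [add_comm]
      congr 1
      · rw [hpl, Real.dist_eq, abs_sub_comm]
      · apply Finset.sum_congr rfl
        intro i _
        rw [hpc i, Real.dist_eq]
    calc f x - g x ≤ |q (Fin.last d) - g x| + ∑ i, Γ i * |x i - y i| := h2
      _ ≤ C * Real.sqrt (|q (Fin.last d) - g x| ^ 2 + ∑ i, |x i - y i| ^ 2) := by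
          simpa [sq_abs] using hcs
      _ = C * dist p q := by rw [hdist]
  have hne : EMetric.hausdorffEdist (truncEpigraph d g B) (truncEpigraph d f B) ≠ ⊤ :=
    Metric.hausdorffEdist_ne_top_of_nonempty_of_bounded
      (truncEpigraph_nonempty hgB) (truncEpigraph_nonempty hfB)
      (truncEpigraph_bounded hB hgB) (truncEpigraph_bounded hB hfB)
  have hinf : (f x - g x) / C ≤ Metric.infDist p (truncEpigraph d f B) := by
    by_contra hlt
    push_neg at hlt
    obtain ⟨q, hq, hdq⟩ := (Metric.infDist_lt_iff (truncEpigraph_nonempty hfB)).mp hlt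
    have := hkey q hq
    rw [lt_div_iff₀ hC0] at hdq
    nlinarith
  have hinfH : Metric.infDist p (truncEpigraph d f B)
      ≤ Metric.hausdorffDist (truncEpigraph d g B) (truncEpigraph d f B) :=
    Metric.infDist_le_hausdorffDist_of_mem hpmem hne
  rw [Metric.hausdorffDist_comm] at hinfH
  have := le_trans hinf hinfH
  rw [div_le_iff₀ hC0] at this
  linarith [this]

theorem sup_dist_le_hausdorff_dist_epigraphs (d : ℕ) (hd : 1 ≤ d) (B : ℝ) (hB : 0 < B)
    (Γ : Fin d → ℝ) (hΓ : ∀ i, 0 < Γ i) (f g : (Fin d → ℝ) → ℝ)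
    (hf : ConvexOn ℝ (Set.Icc (0 : Fin d → ℝ) 1) f)
    (hg : ConvexOn ℝ (Set.Icc (0 : Fin d → ℝ) 1) g)
    (hfB : ∀ x ∈ Set.Icc (0 : Fin d → ℝ) 1, |f x| ≤ B)
    (hgB : ∀ x ∈ Set.Icc (0 : Fin d → ℝ) 1, |g x| ≤ B)
    (hfLip : ∀ i, ∀ x ∈ Set.Icc (0 : Fin d → ℝ) 1, ∀ y ∈ Set.Icc (0 : Fin d → ℝ) 1,
      (∀ j, j ≠ i → x j = y j) → |f x - f y| ≤ Γ i * |x i - y i|)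
    (hgLip : ∀ i, ∀ x ∈ Set.Icc (0 : Fin d → ℝ) 1, ∀ y ∈ Set.Icc (0 : Fin d → ℝ) 1,
      (∀ j, j ≠ i → x j = y j) → |g x - g y| ≤ Γ i * |x i - y i|) :
    ∀ x ∈ Set.Icc (0 : Fin d → ℝ) 1,
      |f x - g x| ≤ Metric.hausdorffDist (truncEpigraph d f B) (truncEpigraph d g B) *
        Real.sqrt (1 + ∑ i, Γ i ^ 2) := by
  intro x hx
  have hΓ' : ∀ i, 0 ≤ Γ i := fun i => le_of_lt (hΓ i)
  rw [abs_sub_le_iff]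
  constructor
  · exact aux_main hB Γ hΓ' f g hfB hgB (fullLip Γ f hfLip) x hx
  · have := aux_main hB Γ hΓ' g f hgB hfB (fullLip Γ g hgLip) x hx
    rwa [Metric.hausdorffDist_comm] at this
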